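/- Fix 0 < q < 1, 0 < a < q^{−1}, b < q^{−1}, c ∈ ℝ ∖ {0}, γ = (1+abq²) − (acq + bq/c), and let w_k = ((bq;q)_k/(q;q)_k)(aq)^k. Let x ∈ ℝ and set λ = aq + 1 − 2√(aq)·x. Define y : ℕ → ℝ by y(k) = Q_k(x; c√(aq), (b/c)√(q/a) | q)/√((q;q)_k (bq;q)_k w_k). Then for every k ∈ ℕ: aq(bq^{k+1}−1)(y(k+1)−y(k)) + (q^k−1)(y(k−1)−y(k)) + γ q^k y(k) = λ y(k), where for k = 0 the term (q^k−1)(y(k−1)−y(k)) is interpreted as 0. -/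

import Mathlib

/-- q-shifted factorial `(a;q)_k = ∏_{j=0}^{k-1} (1 - a q^j)`. -/
noncomputable def qPoch (q a : ℝ) (k : ℕ) : ℝ := ∏ j ∈ Finset.range k, (1 - a * q ^ j)

/-- Al-Salam–Chihara polynomials, defined by `Q_0 = 1`, `Q_1 = 2x − (c+d)` and the
recurrence `2x Q_k = Q_{k+1} + (c+d)q^k Q_k + (1−q^k)(1−cdq^{k−1}) Q_{k−1}`. -/
noncomputable def alSalamChihara (q c d x : ℝ) : ℕ → ℝ
  | 0 => 1
  | 1 => 2 * x - (c + d)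
  | (k + 2) => (2 * x - (c + d) * q ^ (k + 1)) * alSalamChihara q c d x (k + 1)
      - (1 - q ^ (k + 1)) * (1 - c * d * q ^ k) * alSalamChihara q c d x k

lemma qPoch_succ' (q a : ℝ) (k : ℕ) : qPoch q a (k+1) = qPoch q a k * (1 - a * q ^ k) :=
  Finset.prod_range_succ _ _

set_option maxHeartbeats 1000000 in
/-- The sequence `y(k) = Q_k(x; c√(aq), (b/c)√(q/a) | q)/√((q;q)_k (bq;q)_k w_k)` is an
explicit eigenfunction of the operator `T^γ = x(L^{(aq,b)} + γ)` with eigenvalue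
`λ = aq + 1 − 2√(aq) x`. -/
theorem stmt_9 (q a b c : ℝ) (hq : 0 < q) (hq1 : q < 1)
    (ha0 : 0 < a) (ha1 : a < q⁻¹) (hb : b < q⁻¹) (hc : c ≠ 0)
    (γ : ℝ) (hγ : γ = (1 + a * b * q ^ 2) - (a * c * q + b * q / c))
    (w : ℕ → ℝ) (hw : ∀ k, w k = qPoch q (b * q) k / qPoch q q k * (a * q) ^ k)
    (x lam : ℝ) (hlam : lam = a * q + 1 - 2 * Real.sqrt (a * q) * x)
    (y : ℕ → ℝ)
    (hy : ∀ k, y k =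
      alSalamChihara q (c * Real.sqrt (a * q)) (b / c * Real.sqrt (q / a)) x k
        / Real.sqrt (qPoch q q k * qPoch q (b * q) k * w k)) :
    ∀ k : ℕ,
      a * q * (b * q ^ (k + 1) - 1) * (y (k + 1) - y k)
        + (if k = 0 then 0 else (q ^ k - 1) * (y (k - 1) - y k))
        + γ * q ^ k * y k
      = lam * y k := by
  have haq : 0 < a * q := mul_pos ha0 hq
  set s := Real.sqrt (a * q) with hsdef
  set t := Real.sqrt (q / a) with htdef
  have hs0 : 0 < s := Real.sqrt_pos.2 haq
  have hs2 : s * s = a * q := Real.mul_self_sqrt haq.le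
  have hst : s * t = q := by
    rw [hsdef, htdef, ← Real.sqrt_mul haq.le,
      show a * q * (q / a) = q ^ 2 by field_simp]
    exact Real.sqrt_sq hq.le
  have ht' : t = q / s := by
    field_simp
    linarith [hst]
  have ha' : a = s * s / q := by
    rw [hs2]; field_simp
  have hfac : ∀ m : ℕ, 0 < 1 - b * q * q ^ m := by
    intro m
    have hqm : 0 < q ^ m := pow_pos hq m
    have hqm1 : q ^ m ≤ 1 := pow_le_one₀ hq.le hq1.le
    rcases le_or_gt b 0 with hb0 | hb0
    · have h : b * (q * q ^ m) ≤ 0 :=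
        mul_nonpos_iff.mpr (Or.inr ⟨hb0, (mul_pos hq hqm).le⟩)
      nlinarith
    · have hbq : b * q < 1 := by
        have h := mul_lt_mul_of_pos_right hb hq
        rwa [inv_mul_cancel₀ hq.ne'] at h
      nlinarith
  have hPq : ∀ k, 0 < qPoch q q k := by
    intro k
    refine Finset.prod_pos fun j _ => ?_
    have hqj : 0 < q ^ j := pow_pos hq j
    have hqj1 : q ^ j ≤ 1 := pow_le_one₀ hq.le hq1.le
    nlinarith
  have hPb : ∀ k, 0 < qPoch q (b * q) k :=
    fun k => Finset.prod_pos fun j _ => by linarith [hfac j]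
  have hsqrtN : ∀ k, Real.sqrt (qPoch q q k * qPoch q (b * q) k * w k)
      = qPoch q (b * q) k * s ^ k := by
    intro k
    rw [hw k]
    have h2 : (a * q) ^ k = s ^ k * s ^ k := by
      rw [← hs2, mul_pow]
    have h1 : qPoch q q k * qPoch q (b * q) k
        * (qPoch q (b * q) k / qPoch q q k * (a * q) ^ k)
        = (qPoch q (b * q) k * s ^ k) ^ 2 := by
      rw [h2]; field_simp [(hPq k).ne']
    rw [h1, Real.sqrt_sq (mul_nonneg (hPb k).le (pow_nonneg hs0.le k))]
  have hy2 : ∀ k, y k = alSalamChihara q (c * s) (b / c * t) x k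
      / (qPoch q (b * q) k * s ^ k) := by
    intro k; rw [hy k, hsqrtN k]
  subst hγ hlam
  intro k
  match k with
  | 0 =>
    simp only [if_pos rfl, ↓reduceIte, pow_zero, pow_one, hy2]
    have h0 : alSalamChihara q (c * s) (b / c * t) x 0 = 1 := rfl
    have h1 : alSalamChihara q (c * s) (b / c * t) x 1 = 2 * x - (c * s + b / c * t) := rfl
    rw [h0, h1, qPoch_succ' q (b*q) 0]
    have hP0 : qPoch q (b*q) 0 = 1 := rfl
    rw [hP0, ha', ht']
    have h1bq : (1 : ℝ) - b * q ≠ 0 := by have := hfac 0; simp at this ⊢; linarith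
    have h1bq' : (1 : ℝ) - q * b ≠ 0 := by rw [mul_comm]; exact h1bq
    field_simp [h1bq']
    ring
  | (n + 1) =>
    simp only [if_neg (Nat.succ_ne_zero n), Nat.add_sub_cancel, hy2]
    have hrec : alSalamChihara q (c * s) (b / c * t) x (n + 2) =
        (2 * x - (c * s + b / c * t) * q ^ (n + 1))
          * alSalamChihara q (c * s) (b / c * t) x (n + 1)
        - (1 - q ^ (n + 1)) * (1 - (c * s) * (b / c * t) * q ^ n)
          * alSalamChihara q (c * s) (b / c * t) x n := rfl
    have hn : qPoch q (b*q) n ≠ 0 := (hPb n).ne'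
    have hf1 : (1 : ℝ) - b * q * q ^ n ≠ 0 := (hfac n).ne'
    have hf2 : (1 : ℝ) - b * q * q ^ (n+1) ≠ 0 := (hfac (n+1)).ne'
    rw [hrec, qPoch_succ' q (b*q) (n+1), qPoch_succ' q (b*q) n, ha', ht']
    set A := alSalamChihara q (c * s) (b / c * t) x n with hA
    set B := alSalamChihara q (c * s) (b / c * t) x (n + 1) with hB
    set P := qPoch q (b * q) n with hP
    clear hy hy2 hw hrec hA hB hsqrtN hst hs2 htdef hsdef ht' ha'
    have hf1' : (1 : ℝ) - q * b * q ^ n ≠ 0 := by rw [mul_comm q b]; exact hf1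
    have hf2' : (1 : ℝ) - q * b * q ^ (n+1) ≠ 0 := by rw [mul_comm q b]; exact hf2
    field_simp [hc, hs0.ne', hq.ne', hn, hf1, hf2, hf1', hf2']
    ring
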